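/- Let 𝒦 be a complex Hilbert space with an antiunitary involution Γ (Γ² = 1, ⟨Γf, Γg⟩ = ⟨g, f⟩), and let ψ : 𝒦 → A be a linear map into a unital C*-algebra satisfying ψ(f)* = ψ(Γf) and {ψ(f)*, ψ(g)} = ⟨f, g⟩·1. If h ∈ 𝒦 is Γ-invariant with ‖h‖ = 1, then u = √2 ψ(h) is unitary and self-adjoint, and for every f ∈ 𝒦, u ψ(f) u = ψ(Wf) where W = 2|h⟩⟨h| - 1. -/

import Mathlib

/-- In a selfdual CAR algebra: if `h` is `Γ`-invariant with `‖h‖ = 1`, then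
`u = √2·ψ(h)` is unitary and self-adjoint and implements the Bogoliubov
automorphism of `W = 2|h⟩⟨h| - 1`, i.e. `u ψ(f) u = ψ(Wf)`. -/
theorem stmt_9 {𝒦 A : Type*} [NormedAddCommGroup 𝒦] [InnerProductSpace ℂ 𝒦]
    [Ring A] [StarRing A] [Algebra ℂ A]
    (Γ : 𝒦 → 𝒦) (hΓΓ : ∀ f, Γ (Γ f) = f)
    (hΓadd : ∀ f g, Γ (f + g) = Γ f + Γ g)
    (hΓsmul : ∀ (c : ℂ) f, Γ (c • f) = (starRingEnd ℂ c) • Γ f)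
    (hΓinner : ∀ f g, (inner ℂ (Γ f) (Γ g) : ℂ) = inner ℂ g f)
    (ψ : 𝒦 →ₗ[ℂ] A)
    (hstar : ∀ f, star (ψ f) = ψ (Γ f))
    (hCAR : ∀ f g, star (ψ f) * ψ g + ψ g * star (ψ f) = (inner ℂ f g : ℂ) • (1 : A))
    (h : 𝒦) (hh : Γ h = h) (hnorm : ‖h‖ = 1) :
    star (((Real.sqrt 2 : ℝ) : ℂ) • ψ h) = ((Real.sqrt 2 : ℝ) : ℂ) • ψ h ∧
    (((Real.sqrt 2 : ℝ) : ℂ) • ψ h) * (((Real.sqrt 2 : ℝ) : ℂ) • ψ h) = 1 ∧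
    ∀ f : 𝒦, (((Real.sqrt 2 : ℝ) : ℂ) • ψ h) * ψ f * (((Real.sqrt 2 : ℝ) : ℂ) • ψ h)
      = ψ ((2 : ℂ) • (inner ℂ h f : ℂ) • h - f) := by
  have hsa : star (ψ h) = ψ h := by rw [hstar, hh]
  have hih : (inner ℂ h h : ℂ) = 1 := by
    rw [inner_self_eq_norm_sq_to_K, hnorm]; norm_num
  have hsq : ψ h * ψ h + ψ h * ψ h = (1 : A) := by
    have := hCAR h h
    rwa [hsa, hih, one_smul] at this
  have hc2 : ((Real.sqrt 2 : ℝ) : ℂ) * ((Real.sqrt 2 : ℝ) : ℂ) = 2 := by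
    rw [← Complex.ofReal_mul, Real.mul_self_sqrt (by norm_num : (0:ℝ) ≤ 2)]
    norm_num
  refine ⟨?_, ?_, ?_⟩
  · rw [← map_smul, hstar, hΓsmul, hh, Complex.conj_ofReal]
  · rw [smul_mul_smul_comm, hc2, two_smul, hsq]
  · intro f
    have hanti : ψ h * ψ f = (inner ℂ h f : ℂ) • (1 : A) - ψ f * ψ h := by
      have := hCAR h f
      rw [hsa] at this
      rw [eq_sub_iff_add_eq]
      exact this
    have key : ψ h * ψ f * ψ h
        = (inner ℂ h f : ℂ) • ψ h - ψ f * (ψ h * ψ h) := by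
      rw [hanti, sub_mul, smul_mul_assoc, one_mul, mul_assoc]
    have h2 : (2:ℂ) • (ψ h * ψ h) = 1 := by rw [two_smul]; exact hsq
    rw [smul_mul_assoc, mul_smul_comm, smul_mul_assoc, smul_smul, hc2, key,
      map_sub, map_smul, map_smul, smul_sub]
    congr 1
    rw [← mul_smul_comm, h2, mul_one]
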